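/- Let (S,s) be a finite bijective set-theoretic solution to the Pentagon Equation, with s(x,y) = (x·y, θ_x(y)). Then (S,·) is a left group: there exist a nonempty set E, a group G, and a bijection f : S → E × G such that f(x·y) = ((f x)₁, (f x)₂ (f y)₂) for all x,y ∈ S, i.e. f is a semigroup isomorphism onto E × G with multiplication (e,g)(f,h) = (e, gh). -/

import Mathlib

namespace PE
/-- `s` applied to components 1,2 of a triple. -/
def s12 {S : Type*} (s : S × S → S × S) : S × S × S → S × S × S :=
  fun p => ((s (p.1, p.2.1)).1, (s (p.1, p.2.1)).2, p.2.2)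

/-- `s` applied to components 1,3 of a triple. -/
def s13 {S : Type*} (s : S × S → S × S) : S × S × S → S × S × S :=
  fun p => ((s (p.1, p.2.2)).1, p.2.1, (s (p.1, p.2.2)).2)

/-- `s` applied to components 2,3 of a triple. -/
def s23 {S : Type*} (s : S × S → S × S) : S × S × S → S × S × S :=
  fun p => (p.1, s (p.2.1, p.2.2))

/-- `(S, s)` is a set-theoretic solution to the Pentagon Equation:
`s₂₃ ∘ s₁₃ ∘ s₁₂ = s₁₂ ∘ s₂₃`. -/
def IsPE {S : Type*} (s : S × S → S × S) : Prop :=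
  s23 s ∘ s13 s ∘ s12 s = s12 s ∘ s23 s

/-- The induced binary operation `x · y`: the first component of `s (x, y)`. -/
def mul {S : Type*} (s : S × S → S × S) (x y : S) : S := (s (x, y)).1

/-- The map `θ_x`: `theta s x y = θ_x(y)` is the second component of `s (x, y)`. -/
def theta {S : Type*} (s : S × S → S × S) (x y : S) : S := (s (x, y)).2

section Aux

set_option linter.unusedSectionVars false

section Basic

variable {S : Type*} {s : S × S → S × S}

theorem s_pair_eq (s : S × S → S × S) (x y : S) : s (x, y) = (mul s x y, theta s x y) := rfl

theorem pent (hPE : IsPE s) (x y z : S) :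
    mul s (mul s x y) z = mul s x (mul s y z) ∧
      mul s (theta s x y) (theta s (mul s x y) z) = theta s x (mul s y z) ∧
        theta s (theta s x y) (theta s (mul s x y) z) = theta s y z := by
  have h := congrFun hPE (x, y, z)
  simp only [Function.comp_apply, s12, s13, s23, Prod.ext_iff, mul, theta] at h
  exact h

end Basic
section Counting

variable {S : Type*} [Fintype S] [DecidableEq S] {s : S × S → S × S}

variable (s) in
def colPairs (z : S) : Finset (S × S) :=
  Finset.univ.filter fun p => mul s p.1 z = mul s p.2 z

variable (s) in
def tripSetU (u z : S) : Finset (S × S × S) :=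
  Finset.univ.filter fun q =>
    mul s q.1 q.2.1 = u ∧ mul s q.1 q.2.2 = u ∧ mul s q.2.1 z = mul s q.2.2 z

theorem symm_spec (e : S × S ≃ S × S) (he : ⇑e = s) (u v : S) :
    mul s (e.symm (u, v)).1 (e.symm (u, v)).2 = u ∧
      theta s (e.symm (u, v)).1 (e.symm (u, v)).2 = v := by
  have h : s ((e.symm (u, v)).1, (e.symm (u, v)).2) = (u, v) := by
    rw [Prod.mk.eta, ← he]
    exact e.apply_symm_apply (u, v)
  exact ⟨congrArg Prod.fst h, congrArg Prod.snd h⟩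

theorem symm_pair (e : S × S ≃ S × S) (he : ⇑e = s) (x y : S) :
    e.symm (mul s x y, theta s x y) = (x, y) := by
  rw [← s_pair_eq, ← he]
  exact e.symm_apply_apply (x, y)

theorem step (e : S × S ≃ S × S) (he : ⇑e = s)
    (hassoc : ∀ x y z : S, mul s (mul s x y) z = mul s x (mul s y z))
    (hp2 : ∀ x y z : S,
      mul s (theta s x y) (theta s (mul s x y) z) = theta s x (mul s y z))
    {u z a b : S}
    (h : mul s a (theta s u z) = mul s b (theta s u z)) :
    (e.symm (u, a)).1 = (e.symm (u, b)).1 ∧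
      mul s (e.symm (u, a)).2 z = mul s (e.symm (u, b)).2 z := by
  obtain ⟨hma, hta⟩ := symm_spec e he u a
  obtain ⟨hmb, htb⟩ := symm_spec e he u b
  set x := (e.symm (u, a)).1
  set y := (e.symm (u, a)).2
  set x' := (e.symm (u, b)).1
  set y' := (e.symm (u, b)).2
  have key : s (x, mul s y z) = s (x', mul s y' z) := by
    rw [s_pair_eq s x (mul s y z), s_pair_eq s x' (mul s y' z)]
    have c1 : mul s x (mul s y z) = mul s u z := by rw [← hassoc, hma]
    have c1' : mul s x' (mul s y' z) = mul s u z := by rw [← hassoc, hmb]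
    have c2 : theta s x (mul s y z) = mul s a (theta s u z) := by
      rw [← hp2, hma, hta]
    have c2' : theta s x' (mul s y' z) = mul s b (theta s u z) := by
      rw [← hp2, hmb, htb]
    rw [c1, c1', c2, c2', h]
  have hinj : Function.Injective s := by
    rw [← he]; exact e.injective
  have h2 := hinj key
  rw [Prod.mk.injEq] at h2
  exact ⟨h2.1, by rw [h2.2]⟩

/-- The key bijection: collisions at column `θ_u z` correspond to triples. -/
theorem card_colPairs_theta (e : S × S ≃ S × S) (he : ⇑e = s)
    (hassoc : ∀ x y z : S, mul s (mul s x y) z = mul s x (mul s y z))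
    (hp2 : ∀ x y z : S,
      mul s (theta s x y) (theta s (mul s x y) z) = theta s x (mul s y z))
    (u z : S) :
    (colPairs s (theta s u z)).card = (tripSetU s u z).card := by
  refine Finset.card_bij
    (fun p _ => ((e.symm (u, p.1)).1, (e.symm (u, p.1)).2, (e.symm (u, p.2)).2))
    ?_ ?_ ?_
  · intro p hp
    simp only [colPairs, Finset.mem_filter, Finset.mem_univ, true_and] at hp
    obtain ⟨hlam, hrho⟩ := step e he hassoc hp2 hp
    simp only [tripSetU, Finset.mem_filter, Finset.mem_univ, true_and]
    refine ⟨(symm_spec e he u p.1).1, ?_, hrho⟩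
    rw [hlam]
    exact (symm_spec e he u p.2).1
  · intro p hp p' hp' hh
    simp only [colPairs, Finset.mem_filter, Finset.mem_univ, true_and] at hp hp'
    obtain ⟨hlam, _⟩ := step e he hassoc hp2 hp
    obtain ⟨hlam', _⟩ := step e he hassoc hp2 hp'
    rw [Prod.mk.injEq, Prod.mk.injEq] at hh
    obtain ⟨e1, e2, e3⟩ := hh
    have ha : e.symm (u, p.1) = e.symm (u, p'.1) := Prod.ext e1 e2
    have h1 : p.1 = p'.1 := by
      have := congrArg e ha
      rw [e.apply_symm_apply, e.apply_symm_apply, Prod.mk.injEq] at this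
      exact this.2
    have hb : e.symm (u, p.2) = e.symm (u, p'.2) := by
      refine Prod.ext ?_ e3
      rw [← hlam, ← hlam', e1]
    have h2 : p.2 = p'.2 := by
      have := congrArg e hb
      rw [e.apply_symm_apply, e.apply_symm_apply, Prod.mk.injEq] at this
      exact this.2
    exact Prod.ext h1 h2
  · intro q hq
    simp only [tripSetU, Finset.mem_filter, Finset.mem_univ, true_and] at hq
    obtain ⟨h1, h2, h3⟩ := hq
    refine ⟨(theta s q.1 q.2.1, theta s q.1 q.2.2), ?_, ?_⟩
    · simp only [colPairs, Finset.mem_filter, Finset.mem_univ, true_and]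
      calc mul s (theta s q.1 q.2.1) (theta s u z)
          = theta s q.1 (mul s q.2.1 z) := by rw [← h1]; exact hp2 _ _ _
        _ = theta s q.1 (mul s q.2.2 z) := by rw [h3]
        _ = mul s (theta s q.1 q.2.2) (theta s u z) := by
            rw [← h2]; exact (hp2 _ _ _).symm
    · have e1 : e.symm (u, theta s q.1 q.2.1) = (q.1, q.2.1) := by
        rw [← h1]; exact symm_pair e he _ _
      have e2 : e.symm (u, theta s q.1 q.2.2) = (q.1, q.2.2) := by
        rw [← h2]; exact symm_pair e he _ _
      show ((e.symm (u, theta s q.1 q.2.1)).1, (e.symm (u, theta s q.1 q.2.1)).2,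
        (e.symm (u, theta s q.1 q.2.2)).2) = q
      rw [e1, e2]

/-- balance: each `c` has exactly `card S` theta-preimages -/
theorem card_theta_fiber (e : S × S ≃ S × S) (he : ⇑e = s) (c : S) :
    (Finset.univ.filter fun p : S × S => theta s p.1 p.2 = c).card
      = Fintype.card S := by
  rw [← Finset.card_univ (α := S)]
  refine Finset.card_bij (fun p _ => mul s p.1 p.2) ?_ ?_ ?_
  · intro p _; exact Finset.mem_univ _
  · intro p hp p' hp' hh
    simp only [Finset.mem_filter, Finset.mem_univ, true_and] at hp hp'
    have : s (p.1, p.2) = s (p'.1, p'.2) := by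
      rw [s_pair_eq s p.1 p.2, s_pair_eq s p'.1 p'.2, hp, hp']
      rw [hh]
    have hinj : Function.Injective s := by rw [← he]; exact e.injective
    have := hinj this
    rw [Prod.mk.injEq] at this
    exact Prod.ext this.1 this.2
  · intro w _
    refine ⟨e.symm (w, c), ?_, ?_⟩
    · simp only [Finset.mem_filter, Finset.mem_univ, true_and]
      exact (by simpa using (symm_spec e he w c).2)
    · simpa using (symm_spec e he w c).1


variable (s) in
def tripSet (z : S) : Finset (S × S × S) :=
  Finset.univ.filter fun q =>
    mul s q.1 q.2.1 = mul s q.1 q.2.2 ∧ mul s q.2.1 z = mul s q.2.2 z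
theorem tripSet_filter (u z : S) :
    (tripSet s z).filter (fun q => mul s q.1 q.2.1 = u) = tripSetU s u z := by
  ext q
  simp only [tripSet, tripSetU, Finset.mem_filter, Finset.mem_univ, true_and]
  constructor
  · rintro ⟨⟨h1, h2⟩, h3⟩
    exact ⟨h3, h1 ▸ h3, h2⟩
  · rintro ⟨h1, h2, h3⟩
    exact ⟨⟨h1.trans h2.symm, h3⟩, h1⟩

theorem card_tripSet_eq_sum (z : S) :
    (tripSet s z).card = ∑ u : S, (tripSetU s u z).card := by
  rw [Finset.card_eq_sum_card_fiberwise (f := fun q => mul s q.1 q.2.1)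
    (t := Finset.univ) (fun x _ => Finset.mem_univ _)]
  exact Finset.sum_congr rfl fun u _ => by rw [tripSet_filter]

theorem card_tripSet_le (z : S) :
    (tripSet s z).card ≤ (colPairs s z).card * Fintype.card S := by
  rw [Finset.card_eq_sum_card_fiberwise (f := fun q => q.2) (t := colPairs s z)
    (fun q hq => by
      simp only [tripSet, Finset.mem_coe, Finset.mem_filter, Finset.mem_univ, true_and] at hq
      simp only [colPairs, Finset.mem_coe, Finset.mem_filter, Finset.mem_univ, true_and]
      exact hq.2)]
  calc ∑ p ∈ colPairs s z, ((tripSet s z).filter fun q => q.2 = p).card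
      ≤ ∑ _p ∈ colPairs s z, Fintype.card S := by
        refine Finset.sum_le_sum fun p _ => ?_
        have : ((tripSet s z).filter fun q => q.2 = p).card ≤ (Finset.univ : Finset S).card := by
          refine Finset.card_le_card_of_injOn (fun q => q.1) (fun q _ => Finset.mem_univ _) ?_
          intro q hq q' hq' hqq
          simp only [Finset.mem_coe, Finset.mem_filter] at hq hq'
          exact Prod.ext hqq (hq.2.trans hq'.2.symm)
        simpa using this
    _ = (colPairs s z).card * Fintype.card S := by
        rw [Finset.sum_const, smul_eq_mul]

theorem dagger_core
    (hsum : ∀ z : S, (tripSet s z).card = ∑ u : S, (colPairs s (theta s u z)).card)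
    (hle : ∀ z : S, (tripSet s z).card ≤ (colPairs s z).card * Fintype.card S)
    (hbal : ∀ c : S, (Finset.univ.filter fun p : S × S => theta s p.1 p.2 = c).card
      = Fintype.card S)
    {y y' z : S} (h : mul s y z = mul s y' z) (x : S) :
    mul s x y = mul s x y' := by
  classical
  set n := Fintype.card S with hn
  -- global identity
  have global : ∑ z : S, ∑ u : S, (colPairs s (theta s u z)).card
      = ∑ z : S, (colPairs s z).card * n := by
    have h1 : ∑ p : S × S, (colPairs s (theta s p.1 p.2)).card
        = n * ∑ c : S, (colPairs s c).card := by
      rw [← Finset.sum_fiberwise_of_maps_to (g := fun p : S × S => theta s p.1 p.2)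
        (t := Finset.univ) (fun x _ => Finset.mem_univ _)
        (fun p => (colPairs s (theta s p.1 p.2)).card)]
      rw [Finset.mul_sum]
      refine Finset.sum_congr rfl fun c _ => ?_
      have hc : ∀ p ∈ Finset.univ.filter fun p : S × S => theta s p.1 p.2 = c,
          (colPairs s (theta s p.1 p.2)).card = (colPairs s c).card := by
        intro p hp
        simp only [Finset.mem_filter] at hp
        rw [hp.2]
      rw [Finset.sum_congr rfl hc, Finset.sum_const, hbal, smul_eq_mul]
    have h2 : ∑ p : S × S, (colPairs s (theta s p.1 p.2)).card
        = ∑ u : S, ∑ z : S, (colPairs s (theta s u z)).card := by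
      exact Fintype.sum_prod_type _
    rw [← Finset.sum_comm, ← h2, h1, Finset.mul_sum]
    exact Finset.sum_congr rfl fun c _ => Nat.mul_comm _ _
  -- pointwise equality for each z
  have pw : ∀ z : S, ∑ u : S, (colPairs s (theta s u z)).card
      = (colPairs s z).card * n := by
    have hle' : ∀ z ∈ (Finset.univ : Finset S),
        ∑ u : S, (colPairs s (theta s u z)).card ≤ (colPairs s z).card * n := by
      intro z _
      rw [← hsum z]
      exact hle z
    have := (Finset.sum_eq_sum_iff_of_le hle').mp global
    intro z; exact this z (Finset.mem_univ z)
  -- z-level equality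
  have hz : (tripSet s z).card = (colPairs s z).card * n := by
    rw [hsum z]; exact pw z
  -- fiberwise decomposition of tripSet by the pair component
  have hfibdec : (tripSet s z).card
      = ∑ p ∈ colPairs s z, ((tripSet s z).filter fun q => q.2 = p).card := by
    refine Finset.card_eq_sum_card_fiberwise (f := fun q : S × S × S => q.2) ?_
    intro q hq
    simp only [tripSet, Finset.mem_coe, Finset.mem_filter, Finset.mem_univ, true_and] at hq
    simp only [colPairs, Finset.mem_coe, Finset.mem_filter, Finset.mem_univ, true_and]
    exact hq.2
  have hfible : ∀ p ∈ colPairs s z,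
      ((tripSet s z).filter fun q => q.2 = p).card ≤ n := by
    intro p _
    have hinj : ((tripSet s z).filter fun q => q.2 = p).card
        ≤ (Finset.univ : Finset S).card := by
      refine Finset.card_le_card_of_injOn (fun q => q.1)
        (fun q _ => Finset.mem_univ _) ?_
      intro q hq q' hq' hqq
      simp only [Finset.mem_coe, Finset.mem_filter] at hq hq'
      exact Prod.ext hqq (hq.2.trans hq'.2.symm)
    simpa using hinj
  have hfibeq : ∀ p ∈ colPairs s z,
      ((tripSet s z).filter fun q => q.2 = p).card = n := by
    have hsum2 : ∑ p ∈ colPairs s z, ((tripSet s z).filter fun q => q.2 = p).card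
        = ∑ _p ∈ colPairs s z, n := by
      rw [← hfibdec, hz, Finset.sum_const, smul_eq_mul]
    exact fun p hp => (Finset.sum_eq_sum_iff_of_le hfible).mp hsum2 p hp
  -- now extract
  have hp0 : (y, y') ∈ colPairs s z := by
    simp only [colPairs, Finset.mem_filter, Finset.mem_univ, true_and]
    exact h
  have hcard : ((tripSet s z).filter fun q => q.2 = (y, y')).card = n := hfibeq _ hp0
  have himg : (((tripSet s z).filter fun q => q.2 = (y, y')).image fun q => q.1)
      = Finset.univ := by
    refine Finset.eq_univ_of_card _ ?_
    rw [Finset.card_image_of_injOn, hcard]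
    intro q hq q' hq' hqq
    simp only [Finset.mem_coe, Finset.mem_filter] at hq hq'
    exact Prod.ext hqq (hq.2.trans hq'.2.symm)
  have hx : x ∈ (((tripSet s z).filter fun q => q.2 = (y, y')).image fun q => q.1) := by
    rw [himg]; exact Finset.mem_univ x
  rw [Finset.mem_image] at hx
  obtain ⟨q, hq, hq1⟩ := hx
  simp only [Finset.mem_filter, tripSet, Finset.mem_univ, true_and] at hq
  obtain ⟨⟨hm1, _⟩, hq2⟩ := hq
  have : q = (x, y, y') := by rw [← hq1, ← hq2]
  rw [this] at hm1
  exact hm1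


theorem dagger {S : Type*} [Fintype S] [DecidableEq S] {s : S × S → S × S}
    (hPE : IsPE s) (hbij : Function.Bijective s)
    {y y' z : S} (h : mul s y z = mul s y' z) (x : S) :
    mul s x y = mul s x y' := by
  classical
  let e : S × S ≃ S × S := Equiv.ofBijective s hbij
  have he : ⇑e = s := rfl
  have hassoc : ∀ x y z : S, mul s (mul s x y) z = mul s x (mul s y z) :=
    fun x y z => (pent hPE x y z).1
  have hp2 : ∀ x y z : S,
      mul s (theta s x y) (theta s (mul s x y) z) = theta s x (mul s y z) :=
    fun x y z => (pent hPE x y z).2.1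
  refine dagger_core ?_ ?_ ?_ h x
  · intro z
    rw [card_tripSet_eq_sum]
    exact Finset.sum_congr rfl fun u _ =>
      (card_colPairs_theta e he hassoc hp2 u z).symm
  · exact card_tripSet_le
  · exact card_theta_fiber e he
theorem leftGroupStructure0 {M : Type} [Finite M] [Nonempty M] (mul : M → M → M)
    (assoc : ∀ x y z, mul (mul x y) z = mul x (mul y z))
    (surj : ∀ u, ∃ p q, mul p q = u)
    (dagger : ∀ {y y' z : M}, mul y z = mul y' z → ∀ x, mul x y = mul x y') :
    ∃ (E : Type) (G : Type) (_ : Nonempty E) (_ : Group G) (f : M ≃ E × G),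
      ∀ x y : M, f (mul x y) = ((f x).1, (f x).2 * (f y).2) := by
  classical
  -- the congruence ≈ : equal columns
  let aeq : M → M → Prop := fun y y' => ∀ x, mul x y = mul x y'
  have aeq_refl : ∀ y, aeq y y := fun y x => rfl
  have aeq_symm : ∀ {y y'}, aeq y y' → aeq y' y := fun h x => (h x).symm
  have aeq_trans : ∀ {a b c}, aeq a b → aeq b c → aeq a c :=
    fun h1 h2 x => (h1 x).trans (h2 x)
  let sd : Setoid M := ⟨aeq, aeq_refl, fun h => aeq_symm h, fun h1 h2 => aeq_trans h1 h2⟩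
  -- core2 : if all xy ≈ xy' then y ≈ y'
  have core2 : ∀ {y y' : M}, (∀ x, aeq (mul x y) (mul x y')) → aeq y y' := by
    intro y y' hyp p
    obtain ⟨w, x, hwx⟩ := surj p
    calc mul p y = mul (mul w x) y := by rw [hwx]
      _ = mul w (mul x y) := assoc _ _ _
      _ = mul w (mul x y') := hyp x w
      _ = mul (mul w x) y' := (assoc _ _ _).symm
      _ = mul p y' := by rw [hwx]
  -- the quotient
  let G : Type _ := Quotient sd
  have hcong : ∀ (a b : M), aeq a b → ∀ (c d : M), aeq c d → aeq (mul a c) (mul b d) := by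
    intro a b hab c d hcd x
    calc mul x (mul a c) = mul (mul x a) c := (assoc _ _ _).symm
      _ = mul (mul x a) d := hcd _
      _ = mul (mul x b) d := by rw [hab x]
      _ = mul x (mul b d) := assoc _ _ _
  letI : Mul G := ⟨Quotient.map₂ mul hcong⟩
  have mk_mul : ∀ a b : M, (⟦a⟧ : G) * ⟦b⟧ = ⟦mul a b⟧ := fun a b => rfl
  have assocG : ∀ a b c : G, a * b * c = a * (b * c) := by
    intro a b c
    induction a using Quotient.inductionOn
    induction b using Quotient.inductionOn
    induction c using Quotient.inductionOn
    rw [mk_mul, mk_mul, mk_mul, mk_mul]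
    exact Quotient.sound (by rw [assoc])
  -- right cancellation in G
  have rcG : ∀ a b c : G, a * c = b * c → a = b := by
    intro a b c
    induction a using Quotient.inductionOn with | _ y =>
    induction b using Quotient.inductionOn with | _ y' =>
    induction c using Quotient.inductionOn with | _ z =>
    intro hyp
    rw [mk_mul, mk_mul] at hyp
    have h1 : aeq (mul y z) (mul y' z) := Quotient.exact hyp
    refine Quotient.sound (core2 ?_)
    intro x w
    have h2 : mul (mul x y) z = mul (mul x y') z := by
      rw [assoc, assoc]; exact h1 x
    exact dagger h2 w
  -- triviality in G
  have trivG : ∀ a b : G, (∀ x : G, x * a = x * b) → a = b := by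
    intro a b
    induction a using Quotient.inductionOn with | _ y =>
    induction b using Quotient.inductionOn with | _ y' =>
    intro hyp
    refine Quotient.sound (core2 ?_)
    intro x
    have hx : (⟦mul x y⟧ : G) = ⟦mul x y'⟧ := by
      rw [← mk_mul, ← mk_mul]; exact hyp ⟦x⟧
    exact Quotient.exact hx
  -- surjectivity of right multiplication
  have rsurjG : ∀ c u : G, ∃ a : G, a * c = u := by
    intro c u
    have : Function.Injective (fun a : G => a * c) := fun a b hab => rcG a b c hab
    have hs := (Finite.injective_iff_surjective).mp this
    exact hs u
  -- identity
  obtain ⟨a₀⟩ := (inferInstance : Nonempty M)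
  obtain ⟨eG, heG⟩ := rsurjG ⟦a₀⟧ ⟦a₀⟧
  have rightid : ∀ x : G, x * eG = x := by
    intro x
    refine rcG _ _ ⟦a₀⟧ ?_
    rw [assocG, heG]
  -- inverses
  have invex : ∀ a : G, ∃ c : G, c * a = eG := fun a => rsurjG a eG
  have leftid : ∀ a : G, eG * a = a := by
    intro a
    obtain ⟨c, hc⟩ := invex a
    have hP : (a * c) * (a * c) = a * c := by
      calc (a * c) * (a * c) = ((a * c) * a) * c := (assocG _ _ _).symm
        _ = (a * (c * a)) * c := by rw [assocG a c a]
        _ = (a * eG) * c := by rw [hc]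
        _ = a * c := by rw [rightid]
    have hPid : ∀ x : G, x * (a * c) = x := by
      intro x
      refine rcG _ _ (a * c) ?_
      rw [assocG, hP]
    have : a * c = eG := trivG _ _ fun x => by rw [hPid x, rightid x]
    calc eG * a = (a * c) * a := by rw [this]
      _ = a * (c * a) := assocG _ _ _
      _ = a * eG := by rw [hc]
      _ = a := rightid a
  letI : One G := ⟨eG⟩
  letI : Inv G := ⟨fun a => Classical.choose (invex a)⟩
  have invmul : ∀ a : G, a⁻¹ * a = 1 := fun a => Classical.choose_spec (invex a)
  letI : Group G := Group.ofLeftAxioms assocG leftid invmul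
  have one_eq : (1 : G) = eG := rfl
  -- elements of the identity class are right identities
  have sigma_id : ∀ (x w : M), (⟦w⟧ : G) = 1 → mul x w = x := by
    intro x w hw
    obtain ⟨p, q, hpq⟩ := surj x
    have hq : (⟦mul q w⟧ : G) = ⟦q⟧ := by
      rw [← mk_mul, hw, mul_one]
    have haeq : aeq (mul q w) q := Quotient.exact hq
    calc mul x w = mul (mul p q) w := by rw [hpq]
      _ = mul p (mul q w) := assoc _ _ _
      _ = mul p q := haeq p
      _ = x := hpq
  -- orbit relation
  let orel : M → M → Prop := fun x y => ∃ w, mul x w = y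
  have orefl : ∀ x, orel x x := by
    intro x
    obtain ⟨w, hw⟩ := Quotient.exists_rep (1 : G)
    exact ⟨w, sigma_id x w hw⟩
  have osymm : ∀ {x y}, orel x y → orel y x := by
    rintro x y ⟨w, hw⟩
    obtain ⟨w', hw'⟩ := Quotient.exists_rep ((⟦w⟧ : G)⁻¹)
    refine ⟨w', ?_⟩
    have h1 : (⟦mul w w'⟧ : G) = 1 := by
      rw [← mk_mul, hw', mul_inv_cancel]
    calc mul y w' = mul (mul x w) w' := by rw [hw]
      _ = mul x (mul w w') := assoc _ _ _
      _ = x := sigma_id x _ h1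
  have otrans : ∀ {x y z}, orel x y → orel y z → orel x z := by
    rintro x y z ⟨w, hw⟩ ⟨w', hw'⟩
    exact ⟨mul w w', by rw [← assoc, hw, hw']⟩
  let se : Setoid M := ⟨orel, orefl, fun h => osymm h, fun h1 h2 => otrans h1 h2⟩
  let E : Type _ := Quotient se
  let f : M → E × G := fun x => (Quotient.mk se x, Quotient.mk sd x)
  have fmk : ∀ x : M, f x = (Quotient.mk se x, (⟦x⟧ : G)) := fun x => rfl
  have fhom : ∀ x y : M, f (mul x y) = ((f x).1, (f x).2 * (f y).2) := by
    intro x y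
    refine Prod.ext ?_ ?_
    · exact (Quotient.sound (⟨y, rfl⟩ : orel x (mul x y))).symm
    · show (⟦mul x y⟧ : G) = (⟦x⟧ : G) * ⟦y⟧
      rw [mk_mul]
  have finj : Function.Injective f := by
    intro a b hab
    have h1 : Quotient.mk se a = Quotient.mk se b := congrArg Prod.fst hab
    have h2 : (⟦a⟧ : G) = ⟦b⟧ := congrArg Prod.snd hab
    obtain ⟨w, hw⟩ : orel a b := Quotient.exact h1
    have h3 : (⟦a⟧ : G) = ⟦a⟧ * ⟦w⟧ := by
      rw [mk_mul, hw]; exact h2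
    have h4 : (⟦w⟧ : G) = 1 := (left_eq_mul.mp h3)
    rw [← hw]
    exact (sigma_id a w h4).symm
  have fsurj : Function.Surjective f := by
    rintro ⟨qe, g⟩
    obtain ⟨b, hb⟩ := Quotient.exists_rep qe
    obtain ⟨w, hw⟩ := Quotient.exists_rep ((⟦b⟧ : G)⁻¹ * g)
    refine ⟨mul b w, ?_⟩
    refine Prod.ext ?_ ?_
    · show Quotient.mk se (mul b w) = qe
      rw [← hb]
      exact (Quotient.sound (⟨w, rfl⟩ : orel b (mul b w))).symm
    · show (⟦mul b w⟧ : G) = g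
      rw [← mk_mul, hw, mul_inv_cancel_left]
  let fE : M ≃ E × G := Equiv.ofBijective f ⟨finj, fsurj⟩
  exact ⟨E, G, ⟨Quotient.mk se a₀⟩, inferInstance, fE, fhom⟩

theorem leftGroupStructure {M : Type*} [Finite M] [Nonempty M] (mul : M → M → M)
    (assoc : ∀ x y z, mul (mul x y) z = mul x (mul y z))
    (surj : ∀ u, ∃ p q, mul p q = u)
    (dagger : ∀ {y y' z : M}, mul y z = mul y' z → ∀ x, mul x y = mul x y') :
    ∃ (E : Type) (G : Type) (_ : Nonempty E) (_ : Group G) (f : M ≃ E × G),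
      ∀ x y : M, f (mul x y) = ((f x).1, (f x).2 * (f y).2) := by
  obtain ⟨nM, ⟨eM⟩⟩ := Finite.exists_equiv_fin M
  have hne : Nonempty (Fin nM) := ⟨eM (Classical.arbitrary M)⟩
  let mul0 : Fin nM → Fin nM → Fin nM := fun a b => eM (mul (eM.symm a) (eM.symm b))
  have hmul0 : ∀ x y : M, mul0 (eM x) (eM y) = eM (mul x y) := by
    intro x y
    show eM (mul (eM.symm (eM x)) (eM.symm (eM y))) = eM (mul x y)
    rw [Equiv.symm_apply_apply, Equiv.symm_apply_apply]
  obtain ⟨E, G, hE, hG, f0, hf0⟩ := leftGroupStructure0 mul0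
    (by
      intro x y z
      have := assoc (eM.symm x) (eM.symm y) (eM.symm z)
      show eM (mul (eM.symm (eM (mul (eM.symm x) (eM.symm y)))) (eM.symm z))
        = eM (mul (eM.symm x) (eM.symm (eM (mul (eM.symm y) (eM.symm z)))))
      rw [Equiv.symm_apply_apply, Equiv.symm_apply_apply, this])
    (by
      intro u
      obtain ⟨p, q, hpq⟩ := surj (eM.symm u)
      refine ⟨eM p, eM q, ?_⟩
      rw [hmul0, hpq, Equiv.apply_symm_apply])
    (by
      intro y y' z hyp x
      have h1 : mul (eM.symm y) (eM.symm z) = mul (eM.symm y') (eM.symm z) := by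
        have := congrArg eM.symm hyp
        simpa only [mul0, Equiv.symm_apply_apply] using this
      have h2 := dagger h1 (eM.symm x)
      show eM (mul (eM.symm x) (eM.symm y)) = eM (mul (eM.symm x) (eM.symm y'))
      rw [h2])
  refine ⟨E, G, hE, hG, eM.trans f0, ?_⟩
  · intro x y
    show f0 (eM (mul x y)) = _
    rw [← hmul0, hf0]
    rfl


end Counting

end Aux

/-- the multiplicative structure of a finite bijective solution to the
Pentagon Equation is a left group `E × G` with `(e,g)(f,h) = (e, gh)`. -/
theorem statement1 {S : Type*} [Finite S] [Nonempty S] (s : S × S → S × S)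
    (hPE : IsPE s) (hbij : Function.Bijective s) :
    ∃ (E : Type) (G : Type) (_ : Nonempty E) (_ : Group G) (f : S ≃ E × G),
      ∀ x y : S, f (mul s x y) = ((f x).1, (f x).2 * (f y).2) := by
  cases nonempty_fintype S
  classical
  refine leftGroupStructure (mul s) (fun x y z => (pent hPE x y z).1) ?_ ?_
  · intro u
    obtain ⟨p, hp⟩ := hbij.2 (u, u)
    refine ⟨p.1, p.2, ?_⟩
    have : s (p.1, p.2) = (u, u) := by rw [Prod.mk.eta]; exact hp
    exact congrArg Prod.fst this
  · intro y y' z hyp x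
    exact dagger hPE hbij hyp x

end PE
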